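/- Assume S ≼ S̃. For α⋆ > 0 define φ : V → V by φ(u) = P̃(u − α⋆ M⁻¹ ∇f(u)). Then for all u, v ∈ V one has ‖φ(u) − φ(v)‖_M ≤ max{|1 − α⋆L|, |1 − α⋆μ|}·‖u − v‖_M. Consequently, for every α⋆ ∈ (0, 2/L) the map φ is a contraction for the M-norm and has a unique fixed point. -/

import Mathlib

open scoped RealInnerProductSpace

theorem exists_pos_lb' {V : Type*} [NormedAddCommGroup V] [InnerProductSpace ℝ V]
    [FiniteDimensional ℝ V] (M : V →ₗ[ℝ] V)
    (hMpos : ∀ u : V, u ≠ 0 → 0 < ⟪u, M u⟫) :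
    ∃ m > 0, ∀ x : V, m * ‖x‖^2 ≤ ⟪x, M x⟫ := by
  rcases subsingleton_or_nontrivial V with hV | hV
  · refine ⟨1, one_pos, fun x => ?_⟩
    have hx : x = 0 := Subsingleton.elim x 0
    simp [hx]
  · have hcont : Continuous fun x : V => ⟪x, M x⟫ :=
      continuous_id.inner M.continuous_of_finiteDimensional
    obtain ⟨x₀, hx₀mem, hx₀min⟩ :=
      (isCompact_sphere (0:V) 1).exists_isMinOn
        (NormedSpace.sphere_nonempty.mpr zero_le_one) hcont.continuousOn
    have hx₀ : ‖x₀‖ = 1 := by simpa using hx₀mem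
    have hx₀ne : x₀ ≠ 0 := by
      intro h; rw [h] at hx₀; simp at hx₀
    refine ⟨⟪x₀, M x₀⟫, hMpos x₀ hx₀ne, fun x => ?_⟩
    rcases eq_or_ne x 0 with hx | hx
    · simp [hx]
    · have hxn : (0:ℝ) < ‖x‖ := norm_pos_iff.mpr hx
      have hmem : ‖x‖⁻¹ • x ∈ Metric.sphere (0:V) 1 := by
        simp [norm_smul, abs_of_pos (inv_pos.mpr hxn), inv_mul_cancel₀ hxn.ne']
      have h1 : ⟪x₀, M x₀⟫ ≤ ⟪‖x‖⁻¹ • x, M (‖x‖⁻¹ • x)⟫ := hx₀min hmem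
      have h2 : ⟪‖x‖⁻¹ • x, M (‖x‖⁻¹ • x)⟫ = ‖x‖⁻¹ * ‖x‖⁻¹ * ⟪x, M x⟫ := by
        rw [map_smul, real_inner_smul_left, real_inner_smul_right]; ring
      rw [h2] at h1
      have h3 := mul_le_mul_of_nonneg_left h1 (by positivity : (0:ℝ) ≤ ‖x‖^2)
      have h4 : ‖x‖^2 * (‖x‖⁻¹ * ‖x‖⁻¹ * ⟪x, M x⟫) = ⟪x, M x⟫ := by
        field_simp
      nlinarith [h3, h4]

theorem half_cocoercive' {V : Type*} [NormedAddCommGroup V] [InnerProductSpace ℝ V]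
    (M Minv : V →ₗ[ℝ] V)
    (hMinv' : ∀ x, M (Minv x) = x)
    (F : V → ℝ) (g : V → V) (K : ℝ) (hK : 0 < K)
    (h0 : ∀ u v : V, 0 ≤ F u - F v - ⟪g v, u - v⟫)
    (h1 : ∀ u v : V, F u - F v - ⟪g v, u - v⟫ ≤ K/2 * ⟪u-v, M (u-v)⟫)
    (u v : V) :
    (1/(2*K)) * ⟪g v - g u, Minv (g v - g u)⟫ ≤ F v - F u - ⟪g u, v - u⟫ := by
  set Δ := g v - g u with hΔ
  set z := v - K⁻¹ • Minv Δ with hz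
  have e1 := h0 z u
  have e2 := h1 z v
  set p := ⟪g v, Minv Δ⟫ with hp
  set q := ⟪g u, Minv Δ⟫ with hqdef
  have hzv : z - v = -(K⁻¹ • Minv Δ) := by rw [hz]; abel
  have hMzv : M (z - v) = -(K⁻¹ • Δ) := by
    rw [hzv, map_neg, map_smul, hMinv']
  have hq : ⟪z - v, M (z - v)⟫ = K⁻¹ * K⁻¹ * ⟪Δ, Minv Δ⟫ := by
    rw [hMzv, hzv, inner_neg_neg, real_inner_smul_left, real_inner_smul_right,
      real_inner_comm (Minv Δ) Δ]
    ring
  have hgvz : ⟪g v, z - v⟫ = -(K⁻¹ * p) := by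
    rw [hzv, inner_neg_right, real_inner_smul_right]
  have hguz : ⟪g u, z - u⟫ = ⟪g u, v - u⟫ - K⁻¹ * q := by
    have h3 : z - u = (v - u) - K⁻¹ • Minv Δ := by rw [hz]; abel
    rw [h3, inner_sub_right, real_inner_smul_right]
  have hsplit : ⟪Δ, Minv Δ⟫ = p - q := by
    rw [hp, hqdef, hΔ, inner_sub_left]
  rw [hq, hgvz] at e2
  rw [hguz] at e1
  have harith1 : K/2 * (K⁻¹ * K⁻¹ * ⟪Δ, Minv Δ⟫) = (1/(2*K)) * ⟪Δ, Minv Δ⟫ := by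
    field_simp
  have harith2 : K⁻¹ * p - K⁻¹ * q = 2 * ((1/(2*K)) * ⟪Δ, Minv Δ⟫) := by
    rw [hsplit]; field_simp
  rw [harith1] at e2
  linarith

theorem cocoercive_bound' {V : Type*} [NormedAddCommGroup V] [InnerProductSpace ℝ V]
  (M Minv : V →ₗ[ℝ] V) (hMsym : M.IsSymmetric)
  (hMap : ∀ x, M (Minv x) = x) (hMinvap : ∀ x, Minv (M x) = x)
  (hMinvsym : ∀ x y : V, ⟪Minv x, y⟫ = ⟪x, Minv y⟫)
  (hMpsd : ∀ x : V, 0 ≤ ⟪x, M x⟫)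
  (f : V → ℝ) (gradf : V → V)
  (μ L : ℝ) (hμ : 0 < μ) (hμL : μ ≤ L)
  (hlow : ∀ u v : V, μ / 2 * ⟪u - v, M (u - v)⟫ ≤ f u - f v - ⟪gradf v, u - v⟫)
  (hupp : ∀ u v : V, f u - f v - ⟪gradf v, u - v⟫ ≤ L / 2 * ⟪u - v, M (u - v)⟫)
  (u v : V) (ε : ℝ) (hε : 0 < ε) :
    ⟪gradf u - gradf v, Minv (gradf u - gradf v)⟫
      - 2*μ*⟪gradf u - gradf v, u - v⟫ + μ^2*⟪u - v, M (u - v)⟫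
    ≤ (L - μ + ε) * (⟪gradf u - gradf v, u - v⟫ - μ*⟪u - v, M (u - v)⟫) := by
  set K := L - μ + ε with hK
  have hKpos : 0 < K := by rw [hK]; linarith
  set Δ := gradf u - gradf v with hΔ
  set e := u - v with he
  set F : V → ℝ := fun x => f x - μ/2 * ⟪x, M x⟫ with hF
  set g : V → V := fun x => gradf x - μ • M x with hg
  have hDh : ∀ x y : V, F x - F y - ⟪g y, x - y⟫
      = (f x - f y - ⟪gradf y, x - y⟫) - μ/2 * ⟪x - y, M (x - y)⟫ := by
    intro x y
    have hxy : ⟪x - y, M (x - y)⟫ = ⟪x, M x⟫ - ⟪y, M y⟫ - 2*⟪M y, x - y⟫ := by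
      rw [map_sub, inner_sub_left, inner_sub_right, inner_sub_right, inner_sub_right]
      have s1 : (⟪x, M y⟫:ℝ) = ⟪M y, x⟫ := real_inner_comm (M y) x
      have s2 : (⟪y, M x⟫:ℝ) = ⟪M y, x⟫ := (hMsym y x).symm
      have s3 : (⟪y, M y⟫:ℝ) = ⟪M y, y⟫ := real_inner_comm (M y) y
      linear_combination -s1 - s2 + 2 * s3
    have hgy : ⟪g y, x - y⟫ = ⟪gradf y, x - y⟫ - μ * ⟪M y, x - y⟫ := by
      rw [hg]
      simp only [inner_sub_left, real_inner_smul_left]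
    rw [hxy, hgy, hF]
    ring
  have h0 : ∀ x y : V, 0 ≤ F x - F y - ⟪g y, x - y⟫ := by
    intro x y; rw [hDh]; linarith [hlow x y]
  have h1 : ∀ x y : V, F x - F y - ⟪g y, x - y⟫ ≤ K/2 * ⟪x - y, M (x - y)⟫ := by
    intro x y; rw [hDh]
    have := hupp x y
    have := hMpsd (x - y)
    nlinarith
  have c1 := half_cocoercive' M Minv hMap F g K hKpos h0 h1 u v
  have c2 := half_cocoercive' M Minv hMap F g K hKpos h0 h1 v u
  have hgd : g u - g v = Δ - μ • M e := by
    rw [hg, hΔ, he]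
    simp only [map_sub, smul_sub]
    abel
  have hMinvgd : Minv (Δ - μ • M e) = Minv Δ - μ • e := by
    rw [map_sub, map_smul, hMinvap]
  have hneg : g u - g v = -(g v - g u) := by abel
  have hbeq : ⟪g u - g v, Minv (g u - g v)⟫ = ⟪g v - g u, Minv (g v - g u)⟫ := by
    rw [hneg, map_neg, inner_neg_neg]
  rw [hbeq] at c2
  have hsum : (F v - F u - ⟪g u, v - u⟫) + (F u - F v - ⟪g v, e⟫)
      = ⟪g u - g v, e⟫ := by
    have e1 : ⟪g u - g v, e⟫ = ⟪g u, e⟫ - ⟪g v, e⟫ := by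
      rw [inner_sub_left]
    have e2 : ⟪g u, v - u⟫ = -⟪g u, e⟫ := by
      rw [show v - u = -e from by rw [he]; abel, inner_neg_right]
    linarith
  have hsum2 : (1/K) * ⟪g v - g u, Minv (g v - g u)⟫ ≤ ⟪g u - g v, e⟫ := by
    rw [← hsum]
    have hhalf : (1/K : ℝ) = (1/(2*K)) + (1/(2*K)) := by field_simp; ring
    rw [hhalf, add_mul]
    exact add_le_add c1 c2
  have hbg : ⟪g v - g u, Minv (g v - g u)⟫ = ⟪g u - g v, Minv (g u - g v)⟫ := hbeq.symm
  rw [hbg, hgd, hMinvgd] at hsum2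
  clear_value Δ e
  have t3 : (⟪M e, e⟫:ℝ) = ⟪e, M e⟫ := real_inner_comm e (M e)
  have t2 : (⟪M e, Minv Δ⟫:ℝ) = ⟪Δ, e⟫ := by
    calc (⟪M e, Minv Δ⟫:ℝ) = ⟪Minv (M e), Δ⟫ := (hMinvsym (M e) Δ).symm
      _ = ⟪e, Δ⟫ := by rw [hMinvap]
      _ = ⟪Δ, e⟫ := real_inner_comm Δ e
  have hgde : ⟪Δ - μ • M e, e⟫ = ⟪Δ, e⟫ - μ*⟪e, M e⟫ := by
    rw [inner_sub_left, real_inner_smul_left]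
    linear_combination (-μ : ℝ) * t3
  have hbh : ⟪Δ - μ • M e, Minv Δ - μ • e⟫
      = ⟪Δ, Minv Δ⟫ - 2*μ*⟪Δ, e⟫ + μ^2*⟪e, M e⟫ := by
    rw [inner_sub_left, inner_sub_right, inner_sub_right, real_inner_smul_left,
      real_inner_smul_left, real_inner_smul_right, real_inner_smul_right]
    linear_combination (-μ : ℝ) * t2 + (μ:ℝ)^2 * t3
  rw [hgde, hbh] at hsum2
  have hmul := mul_le_mul_of_nonneg_left hsum2 hKpos.le
  have hKK : K * ((1/K) * (⟪Δ, Minv Δ⟫ - 2*μ*⟪Δ, e⟫ + μ^2*⟪e, M e⟫))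
      = ⟪Δ, Minv Δ⟫ - 2*μ*⟪Δ, e⟫ + μ^2*⟪e, M e⟫ := by
    field_simp
  rw [hKK] at hmul
  linarith


noncomputable section

/-- Loewner order: `X ≼ Y` iff `Y - X` is positive semidefinite. -/
def LoewnerLE {E : Type*} [NormedAddCommGroup E] [InnerProductSpace ℝ E]
    (X Y : E →ₗ[ℝ] E) : Prop :=
  ∀ u : E, ⟪u, X u⟫ ≤ ⟪u, Y u⟫

/-- The `A`-norm `‖u‖_A = ⟪u, A u⟫ ^ (1/2)`. -/
def anorm {E : Type*} [NormedAddCommGroup E] [InnerProductSpace ℝ E]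
    (A : E →ₗ[ℝ] E) (u : E) : ℝ :=
  Real.sqrt ⟪u, A u⟫

theorem stmt10 {V W : Type*}
    [NormedAddCommGroup V] [InnerProductSpace ℝ V] [FiniteDimensional ℝ V]
    [NormedAddCommGroup W] [InnerProductSpace ℝ W] [FiniteDimensional ℝ W]
    (M Minv : V →ₗ[ℝ] V) (hMsym : M.IsSymmetric)
    (hMpos : ∀ u : V, u ≠ 0 → 0 < ⟪u, M u⟫)
    (hMinv : Minv ∘ₗ M = LinearMap.id) (hMinv' : M ∘ₗ Minv = LinearMap.id)
    (B : V →ₗ[ℝ] W) (hB : Function.Surjective B)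
    (S : W →ₗ[ℝ] W) (hS : S = B ∘ₗ Minv ∘ₗ LinearMap.adjoint B)
    (St Stinv : W →ₗ[ℝ] W) (hStsym : St.IsSymmetric)
    (hStpos : ∀ w : W, w ≠ 0 → 0 < ⟪w, St w⟫)
    (hStinv : Stinv ∘ₗ St = LinearMap.id) (hStinv' : St ∘ₗ Stinv = LinearMap.id)
    (Pt : V →ₗ[ℝ] V)
    (hPt : Pt = LinearMap.id - Minv ∘ₗ LinearMap.adjoint B ∘ₗ Stinv ∘ₗ B)
    (f : V → ℝ) (gradf : V → V) (hf : ∀ x : V, HasGradientAt f (gradf x) x)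
    (μ L : ℝ) (hμ : 0 < μ) (hμL : μ ≤ L)
    (hlow : ∀ u v : V, μ / 2 * ⟪u - v, M (u - v)⟫ ≤ f u - f v - ⟪gradf v, u - v⟫)
    (hupp : ∀ u v : V, f u - f v - ⟪gradf v, u - v⟫ ≤ L / 2 * ⟪u - v, M (u - v)⟫)
    (hSSt : LoewnerLE S St)
    (αstar : ℝ) (hα : 0 < αstar) :
    (∀ u v : V,
        anorm M (Pt (u - αstar • Minv (gradf u)) - Pt (v - αstar • Minv (gradf v))) ≤
          max |1 - αstar * L| |1 - αstar * μ| * anorm M (u - v)) ∧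
      (αstar < 2 / L →
        max |1 - αstar * L| |1 - αstar * μ| < 1 ∧
          ∃! z : V, Pt (z - αstar • Minv (gradf z)) = z) := by
  have hL : 0 < L := lt_of_lt_of_le hμ hμL
  set c := max |1 - αstar * L| |1 - αstar * μ| with hcdef
  have hc0 : 0 ≤ c := le_trans (abs_nonneg _) (le_max_left _ _)
  have hMap : ∀ x, M (Minv x) = x := fun x => by
    have h := LinearMap.congr_fun hMinv' x; simpa using h
  have hMinvap : ∀ x, Minv (M x) = x := fun x => by
    have h := LinearMap.congr_fun hMinv x; simpa using h
  have hStap : ∀ x, St (Stinv x) = x := fun x => by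
    have h := LinearMap.congr_fun hStinv' x; simpa using h
  have hMinvsym : ∀ x y : V, ⟪Minv x, y⟫ = ⟪x, Minv y⟫ := by
    intro x y
    calc ⟪Minv x, y⟫ = ⟪Minv x, M (Minv y)⟫ := by rw [hMap]
      _ = ⟪M (Minv x), Minv y⟫ := (hMsym _ _).symm
      _ = ⟪x, Minv y⟫ := by rw [hMap]
  have hMpsd : ∀ x : V, 0 ≤ ⟪x, M x⟫ := by
    intro x
    rcases eq_or_ne x 0 with h | h
    · simp [h]
    · exact (hMpos x h).le
  have hStpsd : ∀ x : W, 0 ≤ ⟪x, St x⟫ := by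
    intro x
    rcases eq_or_ne x 0 with h | h
    · simp [h]
    · exact (hStpos x h).le
  -- nonexpansiveness of Pt w.r.t. the M-inner product
  have hPtnon : ∀ x : V, ⟪Pt x, M (Pt x)⟫ ≤ ⟪x, M x⟫ := by
    intro x
    set w := Stinv (B x) with hw
    set q := Minv ((LinearMap.adjoint B) w) with hqd
    have hPtx : Pt x = x - q := by
      rw [hPt]; simp [LinearMap.sub_apply, LinearMap.comp_apply, hqd, hw]
    have hMq : M q = (LinearMap.adjoint B) w := hMap _
    have h1 : ⟪x, M q⟫ = ⟪w, B x⟫ := by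
      calc ⟪x, M q⟫ = ⟪(LinearMap.adjoint B) w, x⟫ := by
            rw [hMq]; exact real_inner_comm _ _
        _ = ⟪w, B x⟫ := LinearMap.adjoint_inner_left B x w
    have h2 : ⟪q, M x⟫ = ⟪w, B x⟫ := by
      rw [hqd, hMinvsym, hMinvap, LinearMap.adjoint_inner_left]
    have h3 : ⟪q, M q⟫ = ⟪w, S w⟫ := by
      calc ⟪q, M q⟫ = ⟪(LinearMap.adjoint B) w, q⟫ := by
            rw [hMq]; exact real_inner_comm _ _
        _ = ⟪w, B q⟫ := LinearMap.adjoint_inner_left _ _ _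
        _ = ⟪w, S w⟫ := by rw [hS]; simp [LinearMap.comp_apply, hqd]
    have h4 : ⟪w, St w⟫ = ⟪w, B x⟫ := by rw [hw, hStap]
    have h5 : (0:ℝ) ≤ ⟪w, B x⟫ := h4 ▸ hStpsd w
    have h6 : ⟪w, S w⟫ ≤ ⟪w, St w⟫ := hSSt w
    have hexp : ⟪Pt x, M (Pt x)⟫
        = ⟪x, M x⟫ - ⟪x, M q⟫ - ⟪q, M x⟫ + ⟪q, M q⟫ := by
      rw [hPtx, map_sub, inner_sub_left, inner_sub_right, inner_sub_right]
      ring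
    rw [hexp, h1, h2, h3]
    linarith
  -- the gradient step is a c-contraction for the M-inner product (squared form)
  have hgrad : ∀ u v : V,
      ⟪(u-v) - αstar • Minv (gradf u - gradf v),
        M ((u-v) - αstar • Minv (gradf u - gradf v))⟫ ≤ c^2 * ⟪u - v, M (u - v)⟫ := by
    intro u v
    have hbound := fun (ε : ℝ) (hε : 0 < ε) =>
      cocoercive_bound' M Minv hMsym hMap hMinvap hMinvsym hMpsd f gradf μ L hμ hμL
        hlow hupp u v ε hε
    obtain ⟨e, he⟩ : ∃ x : V, x = u - v := ⟨_, rfl⟩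
    obtain ⟨Δ, hΔ⟩ : ∃ x : V, x = gradf u - gradf v := ⟨_, rfl⟩
    rw [← he, ← hΔ] at hbound ⊢
    obtain ⟨s, hs⟩ : ∃ x : ℝ, x = ⟪e, M e⟫ := ⟨_, rfl⟩
    obtain ⟨a, ha⟩ : ∃ x : ℝ, x = ⟪Δ, e⟫ := ⟨_, rfl⟩
    obtain ⟨b, hb⟩ : ∃ x : ℝ, x = ⟪Δ, Minv Δ⟫ := ⟨_, rfl⟩
    rw [← hs] at hbound ⊢
    rw [← ha, ← hb] at hbound
    have hs0 : 0 ≤ s := hs ▸ hMpsd e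
    have hMT : M (e - αstar • Minv Δ) = M e - αstar • Δ := by
      rw [map_sub, map_smul, hMap]
    have hT : ⟪e - αstar • Minv Δ, M (e - αstar • Minv Δ)⟫
        = s - 2*αstar*a + αstar^2*b := by
      rw [hMT, hs, ha, hb, inner_sub_left, inner_sub_right, inner_sub_right,
        real_inner_smul_left, real_inner_smul_left, real_inner_smul_right,
        real_inner_smul_right, hMinvsym Δ (M e), hMinvap]
      linear_combination (αstar : ℝ) * real_inner_comm e Δ
        - αstar^2 * real_inner_comm (Minv Δ) Δ
    -- μ s ≤ a ≤ L s
    have hflip : ⟪v - u, M (v - u)⟫ = s := by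
      have h7 : v - u = -e := by rw [he]; abel
      rw [h7, map_neg, inner_neg_neg, ← hs]
    have hfu : ⟪gradf u, v - u⟫ = -⟪gradf u, e⟫ := by
      have h7 : v - u = -e := by rw [he]; abel
      rw [h7, inner_neg_right]
    have hfv : ⟪gradf v, u - v⟫ = ⟪gradf v, e⟫ := by rw [he]
    have hasplit : a = ⟪gradf u, e⟫ - ⟪gradf v, e⟫ := by
      rw [ha, hΔ, inner_sub_left]
    have halow : μ * s ≤ a := by
      have l1 := hlow u v
      have l2 := hlow v u
      rw [hflip, hfu] at l2
      rw [← he, ← hs] at l1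
      linarith
    have haupp : a ≤ L * s := by
      have l1 := hupp u v
      have l2 := hupp v u
      rw [hflip, hfu] at l2
      rw [← he, ← hs] at l1
      linarith
    have hamus : 0 ≤ a - μ * s := by linarith
    -- b ≤ (L+μ) a - μ L s
    have hblim : b ≤ (L + μ) * a - μ * L * s := by
      have hstep : ∀ ε : ℝ, 0 < ε → b ≤ (L + μ) * a - μ * L * s + ε := by
        intro ε hε
        have hd1 : (0:ℝ) < a - μ * s + 1 := by linarith
        have h := hbound (ε / (a - μ * s + 1)) (by positivity)
        have hfrac : ε / (a - μ * s + 1) * (a - μ * s) ≤ ε := by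
          rw [div_mul_eq_mul_div, div_le_iff₀ hd1]
          exact mul_le_mul_of_nonneg_left (by linarith only [hamus]) hε.le
        linarith only [h, hfrac]
      exact le_of_forall_pos_le_add hstep
    rw [hT]
    rcases le_total (αstar * (L + μ)) 2 with hcase | hcase
    · have h1 : (1 - αstar*μ)^2 ≤ c^2 := by
        have h2 : |1 - αstar*μ| ≤ c := le_max_right _ _
        calc (1 - αstar*μ)^2 = |1 - αstar*μ|^2 := (sq_abs _).symm
          _ ≤ c^2 := pow_le_pow_left₀ (abs_nonneg _) h2 2
      have p1 : 0 ≤ (2 - αstar*(L+μ)) * αstar * (a - μ*s) := by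
        apply mul_nonneg (mul_nonneg (by linarith) hα.le) hamus
      have p2 : αstar^2 * b ≤ αstar^2 * ((L + μ) * a - μ * L * s) :=
        mul_le_mul_of_nonneg_left hblim (sq_nonneg αstar)
      have key : s - 2*αstar*a + αstar^2*b ≤ (1 - αstar*μ)^2 * s := by
        linarith only [p1, p2]
      have h3 : (1 - αstar*μ)^2 * s ≤ c^2 * s := mul_le_mul_of_nonneg_right h1 hs0
      linarith only [key, h3]
    · have h1 : (1 - αstar*L)^2 ≤ c^2 := by
        have h2 : |1 - αstar*L| ≤ c := le_max_left _ _
        calc (1 - αstar*L)^2 = |1 - αstar*L|^2 := (sq_abs _).symm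
          _ ≤ c^2 := pow_le_pow_left₀ (abs_nonneg _) h2 2
      have p1 : 0 ≤ (αstar*(L+μ) - 2) * αstar * (L*s - a) := by
        apply mul_nonneg (mul_nonneg (by linarith) hα.le) (by linarith)
      have p2 : αstar^2 * b ≤ αstar^2 * ((L + μ) * a - μ * L * s) :=
        mul_le_mul_of_nonneg_left hblim (sq_nonneg αstar)
      have key : s - 2*αstar*a + αstar^2*b ≤ (1 - αstar*L)^2 * s := by
        linarith only [p1, p2]
      have h3 : (1 - αstar*L)^2 * s ≤ c^2 * s := mul_le_mul_of_nonneg_right h1 hs0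
      linarith only [key, h3]
  -- part 1
  have part1 : ∀ u v : V,
      anorm M (Pt (u - αstar • Minv (gradf u)) - Pt (v - αstar • Minv (gradf v))) ≤
        c * anorm M (u - v) := by
    intro u v
    have hdiff : Pt (u - αstar • Minv (gradf u)) - Pt (v - αstar • Minv (gradf v))
        = Pt ((u-v) - αstar • Minv (gradf u - gradf v)) := by
      rw [← map_sub]
      congr 1
      simp only [map_sub, smul_sub]
      abel
    calc anorm M (Pt (u - αstar • Minv (gradf u)) - Pt (v - αstar • Minv (gradf v)))
        = Real.sqrt ⟪Pt ((u-v) - αstar • Minv (gradf u - gradf v)),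
            M (Pt ((u-v) - αstar • Minv (gradf u - gradf v)))⟫ := by rw [hdiff]; rfl
      _ ≤ Real.sqrt (c^2 * ⟪u - v, M (u - v)⟫) :=
          Real.sqrt_le_sqrt ((hPtnon _).trans (hgrad u v))
      _ = c * Real.sqrt ⟪u - v, M (u - v)⟫ := by
          rw [Real.sqrt_mul (sq_nonneg c), Real.sqrt_sq hc0]
      _ = c * anorm M (u - v) := rfl
  refine ⟨part1, fun hα2 => ?_⟩
  have hαL : αstar * L < 2 := by
    have := (lt_div_iff₀ hL).mp hα2
    linarith
  have hαμ : αstar * μ < 2 := by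
    have h8 := mul_le_mul_of_nonneg_left hμL hα.le
    linarith only [h8, hαL]
  have hc1 : c < 1 := by
    rw [hcdef]
    apply max_lt
    · rw [abs_lt]
      exact ⟨by linarith only [hαL], by linarith only [mul_pos hα hL]⟩
    · rw [abs_lt]
      exact ⟨by linarith only [hαμ], by linarith only [mul_pos hα hμ]⟩
  refine ⟨hc1, ?_⟩
  -- fixed point via Banach iteration w.r.t. the M-norm
  obtain ⟨m0, hm0, hm0le⟩ := exists_pos_lb' M hMpos
  set mm := Real.sqrt m0 with hmmdef
  have hmm : 0 < mm := Real.sqrt_pos.mpr hm0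
  have hlow_n : ∀ x : V, mm * ‖x‖ ≤ anorm M x := by
    intro x
    have h1 : Real.sqrt (m0 * ‖x‖^2) ≤ Real.sqrt ⟪x, M x⟫ := Real.sqrt_le_sqrt (hm0le x)
    rwa [Real.sqrt_mul hm0.le, Real.sqrt_sq (norm_nonneg x)] at h1
  set Mc := LinearMap.toContinuousLinearMap M with hMc
  set CC := Real.sqrt ‖Mc‖ with hCC
  have hCC0 : 0 ≤ CC := Real.sqrt_nonneg _
  have hupp_n : ∀ x : V, anorm M x ≤ CC * ‖x‖ := by
    intro x
    have h1 : ⟪x, M x⟫ ≤ ‖Mc‖ * ‖x‖^2 := by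
      have h2 : ⟪x, M x⟫ ≤ ‖x‖ * ‖M x‖ := real_inner_le_norm x (M x)
      have h3 : ‖M x‖ ≤ ‖Mc‖ * ‖x‖ := by
        have h4 : M x = Mc x := rfl
        rw [h4]
        exact Mc.le_opNorm x
      have h6 := mul_le_mul_of_nonneg_left h3 (norm_nonneg x)
      have h7 : ‖x‖ * (‖Mc‖ * ‖x‖) = ‖Mc‖ * ‖x‖^2 := by ring
      linarith only [h2, h6, h7]
    have h5 : Real.sqrt ⟪x, M x⟫ ≤ Real.sqrt (‖Mc‖ * ‖x‖^2) := Real.sqrt_le_sqrt h1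
    rwa [Real.sqrt_mul (norm_nonneg _), Real.sqrt_sq (norm_nonneg x)] at h5
  set φ : V → V := fun z => Pt (z - αstar • Minv (gradf z)) with hφ
  have hφlip : ∀ x y : V, anorm M (φ x - φ y) ≤ c * anorm M (x - y) := fun x y =>
    part1 x y
  have hlipd : ∀ x y : V, dist (φ x) (φ y) ≤ (c * CC / mm) * dist x y := by
    intro x y
    rw [dist_eq_norm, dist_eq_norm]
    have h1 : mm * ‖φ x - φ y‖ ≤ anorm M (φ x - φ y) := hlow_n _
    have h2 : anorm M (φ x - φ y) ≤ c * anorm M (x - y) := hφlip x y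
    have h3 : anorm M (x - y) ≤ CC * ‖x - y‖ := hupp_n _
    have h4 : mm * ‖φ x - φ y‖ ≤ c * CC * ‖x - y‖ := by
      calc mm * ‖φ x - φ y‖ ≤ c * anorm M (x - y) := le_trans h1 h2
        _ ≤ c * (CC * ‖x - y‖) := mul_le_mul_of_nonneg_left h3 hc0
        _ = c * CC * ‖x - y‖ := by ring
    rw [div_mul_eq_mul_div, le_div_iff₀ hmm]
    linarith only [h4]
  set x : ℕ → V := fun n => φ^[n] 0 with hx
  have hxs : ∀ n, x (n+1) = φ (x n) := fun n => Function.iterate_succ_apply' φ n 0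
  set d0 := anorm M (x 1 - x 0) with hd0def
  have key : ∀ n, anorm M (x (n+1) - x n) ≤ c^n * d0 := by
    intro n
    induction n with
    | zero => simp only [pow_zero, one_mul, zero_add]; exact hd0def.symm.le
    | succ n ih =>
        have h1 : anorm M (x (n+2) - x (n+1)) = anorm M (φ (x (n+1)) - φ (x n)) := by
          rw [hxs (n+1), hxs n]
        calc anorm M (x (n+2) - x (n+1)) = anorm M (φ (x (n+1)) - φ (x n)) := h1
          _ ≤ c * anorm M (x (n+1) - x n) := hφlip _ _
          _ ≤ c * (c^n * d0) := mul_le_mul_of_nonneg_left ih hc0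
          _ = c^(n+1) * d0 := by ring
  have hdist : ∀ n, dist (x n) (x (n+1)) ≤ (d0 / mm) * c^n := by
    intro n
    rw [dist_eq_norm, norm_sub_rev]
    have h1 : mm * ‖x (n+1) - x n‖ ≤ c^n * d0 := le_trans (hlow_n _) (key n)
    rw [div_mul_eq_mul_div, le_div_iff₀ hmm]
    linarith only [h1]
  have hcy : CauchySeq x := cauchySeq_of_le_geometric c (d0 / mm) hc1 hdist
  obtain ⟨z, hz⟩ := cauchySeq_tendsto_of_complete hcy
  have hxz : Filter.Tendsto (fun n => x (n+1)) Filter.atTop (nhds z) :=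
    hz.comp (Filter.tendsto_add_atTop_nat 1)
  have hdz : Filter.Tendsto (fun n => dist (x n) z) Filter.atTop (nhds 0) :=
    tendsto_iff_dist_tendsto_zero.mp hz
  have hφcont : Filter.Tendsto (fun n => φ (x n)) Filter.atTop (nhds (φ z)) := by
    rw [tendsto_iff_dist_tendsto_zero]
    apply squeeze_zero (fun n => dist_nonneg) (fun n => hlipd (x n) z)
    have := hdz.const_mul (c * CC / mm)
    simpa using this
  have hfix : φ z = z := by
    have hEq : (fun n => φ (x n)) = fun n => x (n+1) := funext fun n => (hxs n).symm
    rw [hEq] at hφcont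
    exact tendsto_nhds_unique hφcont hxz
  refine ⟨z, hfix, fun y hy => ?_⟩
  have h1 : anorm M (y - z) ≤ c * anorm M (y - z) := by
    have h2 := hφlip y z
    rw [show φ y = y from hy, hfix] at h2
    exact h2
  have h3 : 0 ≤ anorm M (y - z) := Real.sqrt_nonneg _
  have h4 : anorm M (y - z) ≤ 0 := by
    by_contra h4
    push_neg at h4
    have h5 := mul_lt_mul_of_pos_right hc1 h4
    rw [one_mul] at h5
    linarith only [h1, h5]
  have h5 : mm * ‖y - z‖ ≤ 0 := le_trans (hlow_n _) h4
  have h6 : ‖y - z‖ ≤ 0 := by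
    by_contra h6
    push_neg at h6
    have h7 := mul_pos hmm h6
    linarith only [h5, h7]
  have h7 : y - z = 0 := norm_le_zero_iff.mp h6
  exact sub_eq_zero.mp h7
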